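/- Let m_λ denote the monomial symmetric polynomial in variables z_1,...,z_{k-1}, let λ be a partition with |λ| ≤ k-1, and let η_{k,i} be the operator replacing variables (z_1,...,z_{k-1}) by (z_1,...,z_{i-1},z_{i+1},...,z_k). Then ∑_{i=1}^k z_i^{k-1-|λ|} η_{k,i}(m_λ) / ∏_{j≠i}(z_j - z_i) = (-1)^{k-1-ℓ(λ)} · multinomial(ℓ(λ); m_1(λ), m_2(λ), ...), as rational functions in z_1,...,z_k, where m_j(λ) is the multiplicity of j in λ. -/

import Mathlib

/-- The monomial symmetric polynomial `m_λ` evaluated at `d` variables: the sum of all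
distinct monomials `z^α` whose multiset of nonzero exponents is the multiset of parts
of `λ`. -/
def mSymEval {F : Type*} [CommRing F] {m : ℕ} (lam : Nat.Partition m) {d : ℕ}
    (z : Fin d → F) : F :=
  ∑ α ∈ (Fintype.piFinset fun _ : Fin d => Finset.range (m + 1)).filter
      (fun α => (Multiset.ofList (List.ofFn α)).filter (· ≠ 0) = lam.parts),
    ∏ i, z i ^ α i

open Finset Polynomial

section helperswap
variable {α β M : Type*} [AddCommMonoid M] [Fintype β]

lemma sum_sum_filter_swap (A : Finset α) (q : α → β → Prop) [∀ a b, Decidable (q a b)]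
    (t : α → β → M) :
    ∑ a ∈ A, ∑ b ∈ univ.filter (fun b => q a b), t a b
      = ∑ b : β, ∑ a ∈ A.filter (fun a => q a b), t a b := by
  simp only [Finset.sum_filter]
  exact Finset.sum_comm

end helperswap

section ms
variable {α : Type*} {d : ℕ}

/-- decompose `ofFn` multiset at a pivot index -/
lemma ofFn_multiset_pivot (g : Fin (d+1) → α) (i : Fin (d+1)) :
    (Multiset.ofList (List.ofFn g)) = g i ::ₘ Multiset.ofList (List.ofFn (g ∘ i.succAbove)) := by
  have h1 : (Multiset.ofList (List.ofFn g)) = Multiset.map g Finset.univ.val :=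
    (Fin.univ_val_map g).symm
  have h2 : (Multiset.ofList (List.ofFn (g ∘ i.succAbove)))
      = Multiset.map (g ∘ i.succAbove) Finset.univ.val := (Fin.univ_val_map _).symm
  rw [h1, h2, Fin.univ_succAbove _ i, Finset.cons_val, Multiset.map_cons, Finset.map_val,
    Multiset.map_map]
  rfl

lemma val_le_sum_of_filter_eq {n : ℕ} {s : Multiset ℕ} (γ : Fin n → ℕ)
    (h : (Multiset.ofList (List.ofFn γ)).filter (· ≠ 0) = s) (j : Fin n) : γ j ≤ s.sum := by
  rcases eq_or_ne (γ j) 0 with h0 | h0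
  · simp [h0]
  · have hmem : γ j ∈ s := by
      rw [← h, Multiset.mem_filter]
      exact ⟨by simp [List.mem_ofFn], h0⟩
    exact Multiset.le_sum_of_mem hmem

lemma mem_gam_iff {n N : ℕ} {s : Multiset ℕ} (hN : s.sum ≤ N) (γ : Fin n → ℕ) :
    γ ∈ (Fintype.piFinset fun _ : Fin n => Finset.range (N + 1)).filter
        (fun γ => (Multiset.ofList (List.ofFn γ)).filter (· ≠ 0) = s)
      ↔ (Multiset.ofList (List.ofFn γ)).filter (· ≠ 0) = s := by
  rw [Finset.mem_filter, Fintype.mem_piFinset]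
  constructor
  · exact fun h => h.2
  · intro h
    exact ⟨fun j => Finset.mem_range.2 (Nat.lt_succ_of_le ((val_le_sum_of_filter_eq γ h j).trans hN)), h⟩

lemma card_le_sum_of_zero_not_mem {s : Multiset ℕ} (h0 : 0 ∉ s) : Multiset.card s ≤ s.sum := by
  induction s using Multiset.induction_on with
  | empty => simp
  | cons a s ih =>
    simp only [Multiset.card_cons, Multiset.sum_cons]
    have ha : 1 ≤ a := Nat.one_le_iff_ne_zero.2 fun h => h0 (h ▸ Multiset.mem_cons_self a s)
    have := ih (fun h => h0 (Multiset.mem_cons_of_mem h))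
    omega

lemma multinomial_erase_sum {s : Multiset ℕ} (hs : s ≠ 0) :
    ∑ p ∈ s.toFinset, Nat.multinomial (s.erase p).toFinset ((s.erase p).count)
      = Nat.multinomial s.toFinset s.count := by
  have hprodpos : 0 < ∏ q ∈ s.toFinset, (s.count q).factorial :=
    Finset.prod_pos fun q _ => Nat.factorial_pos _
  refine Nat.eq_of_mul_eq_mul_left hprodpos ?_
  have hspec := Nat.multinomial_spec s.toFinset s.count
  rw [Multiset.toFinset_sum_count_eq] at hspec
  rw [hspec, Finset.mul_sum]
  have hcard : Multiset.card s ≠ 0 := by simpa using hs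
  have key : ∀ p ∈ s.toFinset,
      (∏ q ∈ s.toFinset, (s.count q).factorial) *
        Nat.multinomial (s.erase p).toFinset ((s.erase p).count)
      = s.count p * (Multiset.card s - 1).factorial := by
    intro p hp
    have hps : p ∈ s := Multiset.mem_toFinset.1 hp
    have hcp : 1 ≤ s.count p := Multiset.one_le_count_iff_mem.2 hps
    have hspec' := Nat.multinomial_spec (s.erase p).toFinset ((s.erase p).count)
    rw [Multiset.toFinset_sum_count_eq, Multiset.card_erase_of_mem hps,
      Nat.pred_eq_sub_one] at hspec'
    -- extend product to s.toFinset
    have hsub : (s.erase p).toFinset ⊆ s.toFinset :=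
      Multiset.toFinset_subset.2 (Multiset.subset_of_le (Multiset.erase_le p s))
    have hext : ∏ q ∈ (s.erase p).toFinset, ((s.erase p).count q).factorial
        = ∏ q ∈ s.toFinset, ((s.erase p).count q).factorial := by
      refine Finset.prod_subset (f := fun q => ((s.erase p).count q).factorial) hsub
        fun q hq hnq => ?_
      have : (s.erase p).count q = 0 := Multiset.count_eq_zero.2 fun hmem =>
        hnq (Multiset.mem_toFinset.2 hmem)
      simp [this]
    rw [hext] at hspec'
    -- relate products
    have hcount : ∀ q, (s.erase p).count q = if q = p then s.count p - 1 else s.count q := by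
      intro q
      rcases eq_or_ne q p with rfl | hq
      · rw [Multiset.count_erase_self, if_pos rfl]
      · rw [Multiset.count_erase_of_ne hq, if_neg hq]
    have hprod : s.count p * ∏ q ∈ s.toFinset, ((s.erase p).count q).factorial
        = ∏ q ∈ s.toFinset, (s.count q).factorial := by
      rw [← Finset.prod_erase_mul _ _ hp, ← Finset.prod_erase_mul _ _ hp]
      have h1 : ∏ q ∈ s.toFinset.erase p, ((s.erase p).count q).factorial
          = ∏ q ∈ s.toFinset.erase p, (s.count q).factorial := by
        refine Finset.prod_congr rfl fun q hq => ?_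
        rw [hcount q, if_neg (Finset.mem_erase.1 hq).1]
      rw [h1, hcount p, if_pos rfl, mul_left_comm, Nat.mul_factorial_pred (by omega)]
    calc (∏ q ∈ s.toFinset, (s.count q).factorial) *
          Nat.multinomial (s.erase p).toFinset ((s.erase p).count)
        = s.count p * ((∏ q ∈ s.toFinset, ((s.erase p).count q).factorial) *
            Nat.multinomial (s.erase p).toFinset ((s.erase p).count)) := by
          rw [← mul_assoc, hprod]
      _ = s.count p * (Multiset.card s - 1).factorial := by rw [hspec']
  rw [Finset.sum_congr rfl key, ← Finset.sum_mul, Multiset.toFinset_sum_count_eq]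
  rw [Nat.mul_factorial_pred hcard]

end ms

section lag
variable {F : Type*} [Field F] {d : ℕ}

lemma lagrange_pow_sum (z : Fin (d+1) → F) (hz : Function.Injective z) {r : ℕ} (hr : r ≤ d) :
    ∑ i, z i ^ r / ∏ j ∈ univ.erase i, (z i - z j) = if r = d then 1 else 0 := by
  have hcard : (univ : Finset (Fin (d+1))).card = d + 1 := by simp
  have hdeg : ((X : F[X]) ^ r).degree < ((univ : Finset (Fin (d+1))).card : ℕ) := by
    rw [degree_X_pow, hcard]
    exact_mod_cast Nat.lt_succ_of_le hr
  have h := Lagrange.eq_interpolate (f := (X : F[X]) ^ r) (hz.injOn) hdeg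
  have hc := congrArg (fun p : F[X] => p.coeff d) h
  simp only [Lagrange.interpolate_apply, Polynomial.finset_sum_coeff, coeff_C_mul,
    coeff_X_pow] at hc
  have hbasis : ∀ i : Fin (d+1), (Lagrange.basis univ z i).coeff d =
      (∏ j ∈ univ.erase i, (z i - z j))⁻¹ := by
    intro i
    have hnd : (Lagrange.basis univ z i).natDegree = d := by
      rw [Lagrange.natDegree_basis hz.injOn (mem_univ i), hcard]; omega
    have hlc : (Lagrange.basis univ z i).coeff d = (Lagrange.basis univ z i).leadingCoeff := by
      rw [← Polynomial.coeff_natDegree (p := Lagrange.basis univ z i), hnd]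
    rw [hlc, Lagrange.basis, Polynomial.leadingCoeff_prod, ← Finset.prod_inv_distrib]
    refine Finset.prod_congr rfl fun j hj => ?_
    have hij : z i - z j ≠ 0 := sub_ne_zero.2 fun hzz => (mem_erase.1 hj).1 (hz hzz).symm
    rw [Lagrange.basisDivisor, leadingCoeff_mul, leadingCoeff_C,
      (monic_X_sub_C (z j)).leadingCoeff, mul_one]
  simp only [hbasis, eval_pow, eval_X] at hc
  rw [show (if r = d then (1:F) else 0) = (if d = r then 1 else 0) from
    if_congr (eq_comm) rfl rfl, hc]
  exact Finset.sum_congr rfl fun i _ => (div_eq_mul_inv _ _)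

lemma prod_erase_sub_sign (z : Fin (d+1) → F) (i : Fin (d+1)) :
    ∏ j ∈ univ.erase i, (z j - z i) = (-1 : F) ^ d * ∏ j ∈ univ.erase i, (z i - z j) := by
  have hcard : (univ.erase i).card = d := by simp
  calc ∏ j ∈ univ.erase i, (z j - z i) = ∏ j ∈ univ.erase i, (-1 : F) * (z i - z j) := by
        refine Finset.prod_congr rfl fun j _ => by ring
    _ = (-1 : F) ^ d * ∏ j ∈ univ.erase i, (z i - z j) := by
        rw [Finset.prod_mul_distrib, Finset.prod_const, hcard]

lemma lagrange_pow_sum' (z : Fin (d+1) → F) (hz : Function.Injective z) {r : ℕ} (hr : r ≤ d) :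
    ∑ i, z i ^ r / ∏ j ∈ univ.erase i, (z j - z i)
      = (-1 : F) ^ d * (if r = d then 1 else 0) := by
  have hsign : ((-1 : F) ^ d)⁻¹ = (-1 : F) ^ d := by
    rw [← inv_pow, inv_neg, inv_one]
  rw [← lagrange_pow_sum z hz hr, Finset.mul_sum]
  refine Finset.sum_congr rfl fun i _ => ?_
  rw [prod_erase_sub_sign z i, div_mul_eq_div_div_swap, div_eq_mul_inv _ ((-1 : F)^d), hsign]
  ring

end lag

section key
variable {F : Type*} [Field F] {d : ℕ}

def Gam (d : ℕ) (s : Multiset ℕ) : Finset (Fin (d+1) → ℕ) :=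
  (Fintype.piFinset fun _ : Fin (d+1) => Finset.range (s.sum + 1)).filter
    (fun γ => (Multiset.ofList (List.ofFn γ)).filter (· ≠ 0) = s)

lemma mem_Gam {s : Multiset ℕ} {γ : Fin (d+1) → ℕ} :
    γ ∈ Gam d s ↔ (Multiset.ofList (List.ofFn γ)).filter (· ≠ 0) = s :=
  mem_gam_iff le_rfl γ

lemma prod_pow_update_pivot (z : Fin (d+1) → F) (i : Fin (d+1)) (γ : Fin (d+1) → ℕ) :
    ∏ j, z j ^ γ j = z i ^ γ i * ∏ j, z j ^ (Function.update γ i 0) j := by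
  rw [Fin.prod_univ_succAbove (fun j => z j ^ γ j) i,
    Fin.prod_univ_succAbove (fun j => z j ^ (Function.update γ i 0) j) i]
  simp [Function.update_apply, Fin.succAbove_ne]


lemma key (z : Fin (d+1) → F) (hz : Function.Injective z) :
    ∀ s : Multiset ℕ, 0 ∉ s → s.sum ≤ d →
    ∑ γ ∈ Gam d s, ∑ i ∈ univ.filter (fun i => γ i = 0),
        (∏ j, z j ^ γ j) * z i ^ (d - s.sum) / ∏ j ∈ univ.erase i, (z j - z i)
      = (-1 : F) ^ (d - Multiset.card s) * (Nat.multinomial s.toFinset s.count : F) := by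
  intro s
  induction s using Multiset.strongInductionOn with
  | _ s IH =>
  intro h0 hs
  by_cases hs0 : s = 0
  · subst hs0
    have hG : Gam d (0 : Multiset ℕ) = {fun _ => 0} := by
      ext γ
      rw [mem_Gam, Finset.mem_singleton]
      constructor
      · intro h
        funext j
        by_contra hj
        have : γ j ∈ (0 : Multiset ℕ) :=
          h ▸ (Multiset.mem_filter.2 ⟨Multiset.mem_coe.2 (List.mem_ofFn.2 ⟨j, rfl⟩), hj⟩)
        simp at this
      · rintro rfl
        simp
    rw [hG, Finset.sum_singleton]
    have hl := lagrange_pow_sum' z hz (le_refl d)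
    simp only [eq_self_iff_true, if_true, mul_one] at hl
    simp only [Multiset.card_zero, Nat.sub_zero, Multiset.toFinset_zero,
      Nat.multinomial_empty, Multiset.sum_zero, Nat.cast_one, mul_one, pow_zero,
      Finset.prod_const_one, one_mul, eq_self_iff_true, Finset.filter_true]
    exact hl
  · -- s ≠ 0
    have hMpos : 0 < s.sum := by
      obtain ⟨a, ha⟩ := Multiset.exists_mem_of_ne_zero hs0
      have h1 : 1 ≤ a := Nat.one_le_iff_ne_zero.2 fun h => h0 (h ▸ ha)
      exact lt_of_lt_of_le h1 (Multiset.le_sum_of_mem ha)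
    have hcard1 : 1 ≤ Multiset.card s := Multiset.card_pos.2 hs0
    have hcards : Multiset.card s ≤ d := le_trans (card_le_sum_of_zero_not_mem h0) hs
    set T : (Fin (d+1) → ℕ) → Fin (d+1) → F := fun γ i =>
      (∏ j, z j ^ γ j) * z i ^ (d - s.sum) / ∏ j ∈ univ.erase i, (z j - z i) with hT
    have hsplit : ∀ γ ∈ Gam d s,
        ∑ i ∈ univ.filter (fun i => γ i = 0), T γ i
          = (∑ i, T γ i) - ∑ i ∈ univ.filter (fun i => ¬ γ i = 0), T γ i := by
      intro γ _
      rw [← Finset.sum_filter_add_sum_filter_not univ (fun i => γ i = 0) (T γ),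
        add_sub_cancel_right]
    rw [Finset.sum_congr rfl hsplit, Finset.sum_sub_distrib]
    have hB : ∀ γ ∈ Gam d s, ∑ i, T γ i = 0 := by
      intro γ _
      have h1 : ∀ i, T γ i = (∏ j, z j ^ γ j) *
          (z i ^ (d - s.sum) / ∏ j ∈ univ.erase i, (z j - z i)) := by
        intro i; simp only [hT]; rw [mul_div_assoc]
      rw [Finset.sum_congr rfl fun i _ => h1 i, ← Finset.mul_sum,
        lagrange_pow_sum' z hz (Nat.sub_le d s.sum), if_neg (by omega : ¬ d - s.sum = d)]
      ring
    rw [Finset.sum_congr rfl hB, Finset.sum_const, smul_zero, zero_sub]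
    -- now compute the negative part
    rw [sum_sum_filter_swap (Gam d s) (fun γ i => ¬ γ i = 0) T]
    have hfib : ∀ i : Fin (d+1),
        ∑ γ ∈ (Gam d s).filter (fun γ => ¬ γ i = 0), T γ i
          = ∑ p ∈ s.toFinset, ∑ γ ∈ (Gam d s).filter (fun γ => γ i = p), T γ i := by
      intro i
      rw [← Finset.sum_fiberwise_of_maps_to (g := fun γ => γ i)
        (fun γ hγ => ?_) (fun γ => T γ i)]
      · refine Finset.sum_congr rfl fun p hp => ?_
        have hpne : p ≠ 0 := fun h => h0 (h ▸ Multiset.mem_toFinset.1 hp)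
        congr 1
        rw [Finset.filter_filter]
        refine Finset.filter_congr fun γ _ => ?_
        constructor
        · exact fun h => h.2
        · exact fun h => ⟨fun h' => hpne (h' ▸ h.symm ▸ rfl), h⟩
      · rcases Finset.mem_filter.1 hγ with ⟨hγG, hne⟩
        have : γ i ∈ s := by
          rw [← mem_Gam.1 hγG]
          exact Multiset.mem_filter.2 ⟨Multiset.mem_coe.2 (List.mem_ofFn.2 ⟨i, rfl⟩), hne⟩
        exact Multiset.mem_toFinset.2 this
    rw [Finset.sum_congr rfl fun i _ => hfib i, Finset.sum_comm]
    have hbij : ∀ p ∈ s.toFinset, ∀ i : Fin (d+1),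
        ∑ γ ∈ (Gam d s).filter (fun γ => γ i = p), T γ i
          = ∑ γ ∈ (Gam d (s.erase p)).filter (fun γ => γ i = 0),
              (∏ j, z j ^ γ j) * z i ^ (d - (s.erase p).sum) /
                ∏ j ∈ univ.erase i, (z j - z i) := by
      intro p hp i
      have hps : p ∈ s := Multiset.mem_toFinset.1 hp
      have hpne : p ≠ 0 := fun h => h0 (h ▸ hps)
      have hple : p ≤ s.sum := Multiset.le_sum_of_mem hps
      have h2 : s.sum = p + (s.erase p).sum := by
        conv_lhs => rw [← Multiset.cons_erase hps]
        rw [Multiset.sum_cons]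
      have hupdcomp : ∀ (γ : Fin (d+1) → ℕ) (x : ℕ) (t : Fin d),
          Function.update γ i x (i.succAbove t) = γ (i.succAbove t) := fun γ x t =>
        Function.update_of_ne (Fin.succAbove_ne i t) x γ
      refine Finset.sum_bij' (fun γ _ => Function.update γ i 0)
        (fun γ' _ => Function.update γ' i p) ?_ ?_ ?_ ?_ ?_
      · -- maps to
        intro γ hγ
        rcases Finset.mem_filter.1 hγ with ⟨hγG, hγi⟩
        have hdec := ofFn_multiset_pivot γ i
        have hdec' := ofFn_multiset_pivot (Function.update γ i 0) i
        rw [Function.update_self] at hdec'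
        have hcompeq : (Function.update γ i 0) ∘ i.succAbove = γ ∘ i.succAbove := by
          funext t; exact hupdcomp γ 0 t
        rw [hcompeq] at hdec'
        have hfg := mem_Gam.1 hγG
        rw [hdec, Multiset.filter_cons_of_pos _ (by simpa [hγi] using hpne)] at hfg
        refine Finset.mem_filter.2 ⟨mem_Gam.2 ?_, Function.update_self i 0 γ⟩
        rw [hdec', Multiset.filter_cons_of_neg _ (by simp)]
        have : s.erase p = ((γ i) ::ₘ (Multiset.ofList (List.ofFn (γ ∘ i.succAbove))).filter
            (· ≠ 0)).erase p := by rw [hfg]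
        rw [this, hγi, Multiset.erase_cons_head]
      · -- maps back
        intro γ' hγ'
        rcases Finset.mem_filter.1 hγ' with ⟨hγG, hγi⟩
        have hdec := ofFn_multiset_pivot γ' i
        have hdec' := ofFn_multiset_pivot (Function.update γ' i p) i
        rw [Function.update_self] at hdec'
        have hcompeq : (Function.update γ' i p) ∘ i.succAbove = γ' ∘ i.succAbove := by
          funext t; exact hupdcomp γ' p t
        rw [hcompeq] at hdec'
        have hfg := mem_Gam.1 hγG
        rw [hdec, hγi, Multiset.filter_cons_of_neg _ (by simp)] at hfg
        refine Finset.mem_filter.2 ⟨mem_Gam.2 ?_, Function.update_self i p γ'⟩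
        rw [hdec', Multiset.filter_cons_of_pos _ (by simpa using hpne), hfg,
          Multiset.cons_erase hps]
      · -- left inverse
        intro γ hγ
        rcases Finset.mem_filter.1 hγ with ⟨_, hγi⟩
        show Function.update (Function.update γ i 0) i p = γ
        rw [Function.update_idem, ← hγi, Function.update_eq_self]
      · -- right inverse
        intro γ' hγ'
        rcases Finset.mem_filter.1 hγ' with ⟨_, hγi⟩
        show Function.update (Function.update γ' i p) i 0 = γ'
        rw [Function.update_idem, ← hγi, Function.update_eq_self]
      · -- values
        intro γ hγ
        rcases Finset.mem_filter.1 hγ with ⟨_, hγi⟩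
        show T γ i = (∏ j, z j ^ (Function.update γ i 0) j) *
            z i ^ (d - (s.erase p).sum) / ∏ j ∈ univ.erase i, (z j - z i)
        simp only [hT]
        rw [prod_pow_update_pivot z i γ, hγi,
          show d - (s.erase p).sum = p + (d - s.sum) from by omega, pow_add]
        ring
    rw [Finset.sum_congr rfl fun p hp => Finset.sum_congr rfl fun i _ => hbij p hp i]
    have hinner : ∀ p ∈ s.toFinset,
        ∑ i : Fin (d+1), ∑ γ ∈ (Gam d (s.erase p)).filter (fun γ => γ i = 0),
            (∏ j, z j ^ γ j) * z i ^ (d - (s.erase p).sum) /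
              ∏ j ∈ univ.erase i, (z j - z i)
          = (-1 : F) ^ (d - Multiset.card (s.erase p)) *
              (Nat.multinomial (s.erase p).toFinset (s.erase p).count : F) := by
      intro p hp
      have hps : p ∈ s := Multiset.mem_toFinset.1 hp
      rw [← sum_sum_filter_swap (Gam d (s.erase p)) (fun γ i => γ i = 0)
        (fun γ i => (∏ j, z j ^ γ j) * z i ^ (d - (s.erase p).sum) /
          ∏ j ∈ univ.erase i, (z j - z i))]
      exact IH (s.erase p) (Multiset.erase_lt.2 hps)
        (fun h => h0 (Multiset.mem_of_mem_erase h))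
        (by
          have h2 : s.sum = p + (s.erase p).sum := by
            conv_lhs => rw [← Multiset.cons_erase hps]
            rw [Multiset.sum_cons]
          omega)
    rw [Finset.sum_congr rfl hinner]
    have hcarderase : ∀ p ∈ s.toFinset,
        d - Multiset.card (s.erase p) = (d - Multiset.card s) + 1 := by
      intro p hp
      rw [Multiset.card_erase_of_mem (Multiset.mem_toFinset.1 hp), Nat.pred_eq_sub_one]
      omega
    calc -∑ p ∈ s.toFinset, (-1 : F) ^ (d - Multiset.card (s.erase p)) *
            (Nat.multinomial (s.erase p).toFinset (s.erase p).count : F)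
        = -∑ p ∈ s.toFinset, ((-1 : F) ^ (d - Multiset.card s) * (-1)) *
            (Nat.multinomial (s.erase p).toFinset (s.erase p).count : F) := by
          refine congrArg _ (Finset.sum_congr rfl fun p hp => ?_)
          rw [hcarderase p hp, pow_succ]
      _ = (-1 : F) ^ (d - Multiset.card s) *
            ∑ p ∈ s.toFinset, (Nat.multinomial (s.erase p).toFinset (s.erase p).count : F) := by
          rw [← Finset.mul_sum]; ring
      _ = (-1 : F) ^ (d - Multiset.card s) * (Nat.multinomial s.toFinset s.count : F) := by
          rw [← Nat.cast_sum, multinomial_erase_sum hs0]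

end key

section bridge2
variable {F : Type*} [Field F] {d m : ℕ}

lemma mSymEval_eq_gam_sum (hm : m ≤ d) (lam : Nat.Partition m) (z : Fin (d + 1) → F)
    (i : Fin (d + 1)) :
    mSymEval lam (z ∘ i.succAbove)
      = ∑ γ ∈ (Gam d lam.parts).filter (fun γ => γ i = 0), ∏ j, z j ^ γ j := by
  have hps : lam.parts.sum = m := lam.parts_sum
  refine Finset.sum_bij' (fun α _ => i.insertNth 0 α) (fun γ _ => γ ∘ i.succAbove)
    ?_ ?_ ?_ ?_ ?_
  · -- maps to
    intro α hα
    rcases Finset.mem_filter.1 hα with ⟨_, hαf⟩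
    have hcomp : (i.insertNth 0 α) ∘ i.succAbove = α := by
      funext t; exact Fin.insertNth_apply_succAbove (α := fun _ => ℕ) i 0 α t
    have hdec := ofFn_multiset_pivot (i.insertNth 0 α) i
    rw [Fin.insertNth_apply_same, hcomp] at hdec
    refine Finset.mem_filter.2 ⟨mem_Gam.2 ?_, ?_⟩
    · rw [hdec, Multiset.filter_cons_of_neg _ (by simp)]
      exact hαf
    · exact Fin.insertNth_apply_same (α := fun _ => ℕ) i 0 α
  · -- maps back
    intro γ hγ
    rcases Finset.mem_filter.1 hγ with ⟨hγG, hγi⟩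
    have hfg := mem_Gam.1 hγG
    have hdec := ofFn_multiset_pivot γ i
    rw [hdec, hγi, Multiset.filter_cons_of_neg _ (by simp)] at hfg
    refine Finset.mem_filter.2 ⟨Fintype.mem_piFinset.2 fun t => Finset.mem_range.2 ?_, hfg⟩
    have := val_le_sum_of_filter_eq γ (mem_Gam.1 hγG) (i.succAbove t)
    rw [hps] at this
    exact Nat.lt_succ_of_le this
  · -- left inverse
    intro α hα
    show (i.insertNth 0 α) ∘ i.succAbove = α
    funext t; exact Fin.insertNth_apply_succAbove (α := fun _ => ℕ) i 0 α t
  · -- right inverse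
    intro γ hγ
    rcases Finset.mem_filter.1 hγ with ⟨_, hγi⟩
    show i.insertNth 0 (γ ∘ i.succAbove) = γ
    exact Fin.insertNth_eq_iff.2 ⟨hγi.symm, rfl⟩
  · -- values
    intro α hα
    show ∏ t, (z ∘ i.succAbove) t ^ α t = ∏ j, z j ^ (i.insertNth 0 α) j
    calc ∏ t, (z ∘ i.succAbove) t ^ α t
        = z i ^ ((i.insertNth (α := fun _ => ℕ) 0 α) i) *
            ∏ t, z (i.succAbove t) ^ (i.insertNth (α := fun _ => ℕ) 0 α) (i.succAbove t) := by
          rw [Fin.insertNth_apply_same, pow_zero, one_mul]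
          exact Finset.prod_congr rfl fun t _ => by
            rw [Fin.insertNth_apply_succAbove (α := fun _ => ℕ)]; rfl
      _ = ∏ j, z j ^ (i.insertNth 0 α) j :=
          (Fin.prod_univ_succAbove (fun j => z j ^ (i.insertNth 0 α) j) i).symm

end bridge2

/-- here `k = d + 1`: for a partition `λ` with `|λ| ≤ k - 1` and distinct
`z 1, ..., z k`, with `η_{k,i}` substituting the variable list omitting `z i`,
`∑_i z i^(k-1-|λ|) η_{k,i}(m_λ) / ∏_{j≠i}(z j - z i)
  = (-1)^(k-1-ℓ(λ)) multinomial(ℓ(λ); m_1(λ), m_2(λ), ...)`. -/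
theorem monomial_symmetric_sum {F : Type*} [Field F] {d m : ℕ} (hm : m ≤ d)
    (lam : Nat.Partition m) (z : Fin (d + 1) → F) (hz : Function.Injective z) :
    ∑ i : Fin (d + 1),
        z i ^ (d - m) * mSymEval lam (z ∘ i.succAbove) /
          ∏ j ∈ Finset.univ.erase i, (z j - z i)
      = (-1 : F) ^ (d - lam.parts.card) *
          (Nat.multinomial lam.parts.toFinset (fun j => lam.parts.count j) : F) := by
  have hps : lam.parts.sum = m := lam.parts_sum
  have h0 : 0 ∉ lam.parts := fun h => lt_irrefl 0 (lam.parts_pos h)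
  have hkey := key z hz lam.parts h0 (by omega)
  rw [hps] at hkey
  rw [← hkey, sum_sum_filter_swap (Gam d lam.parts) (fun γ i => γ i = 0)
    (fun γ i => (∏ j, z j ^ γ j) * z i ^ (d - m) / ∏ j ∈ univ.erase i, (z j - z i))]
  refine Finset.sum_congr rfl fun i _ => ?_
  rw [mSymEval_eq_gam_sum hm lam z i, Finset.mul_sum, Finset.sum_div]
  refine Finset.sum_congr rfl fun γ _ => ?_
  ring
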